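/- Let ρ1 be a positive definite Hermitian D×D complex matrix and ρ0 a positive semidefinite D×D complex matrix, and let M = ρ1^{-1/2} √(ρ1^{1/2} ρ0 ρ1^{1/2}) ρ1^{-1/2}. Then (i) M satisfies the matrix quadratic equation M ρ1 M = ρ0, and (ii) for every eigenvector v of M with eigenvalue m (so M v = m v), one has m² · ⟨v, ρ1 v⟩ = ⟨v, ρ0 v⟩; i.e., the squared eigenvalues of M are ratios of the measured probabilities tr(ρ0 E_b)/tr(ρ1 E_b) for the projectors E_b onto its eigenvectors. -/

import Mathlib

open Matrix
open scoped ComplexOrder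

/-- The square root of a positive semidefinite matrix (removed from Mathlib; restored with its
old definition). -/
noncomputable def Matrix.PosSemidef.sqrt {n : Type*} {𝕜 : Type*} [Fintype n] [DecidableEq n]
    [RCLike 𝕜] {A : Matrix n n 𝕜} (hA : A.PosSemidef) : Matrix n n 𝕜 :=
  hA.1.eigenvectorUnitary.1 * diagonal ((↑) ∘ (fun i => (hA.1.eigenvalues i).sqrt)) *
    (star hA.1.eigenvectorUnitary : Matrix n n 𝕜)

theorem Matrix.PosSemidef.posSemidef_sqrt {n : Type*} {𝕜 : Type*} [Fintype n] [DecidableEq n]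
    [RCLike 𝕜] {A : Matrix n n 𝕜} (hA : A.PosSemidef) : hA.sqrt.PosSemidef := by
  have hd : (diagonal ((↑) ∘ (fun i => (hA.1.eigenvalues i).sqrt)) : Matrix n n 𝕜).PosSemidef :=
    posSemidef_diagonal_iff.mpr (fun i => by
      simp only [Function.comp_apply]
      exact_mod_cast Real.sqrt_nonneg _)
  have h := hd.mul_mul_conjTranspose_same (hA.1.eigenvectorUnitary : Matrix n n 𝕜)
  unfold Matrix.PosSemidef.sqrt
  convert h using 1
  first
    | rfl
    | simp [Matrix.star_eq_conjTranspose]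

/-- The sandwiched matrix `ρ1^{1/2} ρ0 ρ1^{1/2}` is positive semidefinite. -/
noncomputable def sandwichPosSemidef {D : ℕ} {ρ0 ρ1 : Matrix (Fin D) (Fin D) ℂ}
    (hρ0 : ρ0.PosSemidef) (hρ1 : ρ1.PosSemidef) :
    (hρ1.sqrt * ρ0 * hρ1.sqrt).PosSemidef := by
  have h := hρ0.mul_mul_conjTranspose_same hρ1.sqrt
  rwa [hρ1.posSemidef_sqrt.isHermitian.eq] at h

/-- The operator `M = ρ1^{-1/2} √(ρ1^{1/2} ρ0 ρ1^{1/2}) ρ1^{-1/2}`. -/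
noncomputable def Mop {D : ℕ} {ρ0 ρ1 : Matrix (Fin D) (Fin D) ℂ}
    (hρ0 : ρ0.PosSemidef) (hρ1 : ρ1.PosSemidef) : Matrix (Fin D) (Fin D) ℂ :=
  hρ1.sqrt⁻¹ * (sandwichPosSemidef hρ0 hρ1).sqrt * hρ1.sqrt⁻¹

/-- The operator `M = ρ1^{-1/2} √(ρ1^{1/2} ρ0 ρ1^{1/2}) ρ1^{-1/2}` satisfies the matrix
quadratic equation `M ρ1 M = ρ0`, and its squared eigenvalues are the ratios of the
quadratic forms of `ρ0` and `ρ1` on its eigenvectors. -/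
theorem Mop_quadratic_and_eigenvalues {D : ℕ} (ρ0 ρ1 : Matrix (Fin D) (Fin D) ℂ)
    (hρ0 : ρ0.PosSemidef) (hρ1 : ρ1.PosDef) :
    Mop hρ0 hρ1.posSemidef * ρ1 * Mop hρ0 hρ1.posSemidef = ρ0 ∧
    ∀ (v : Fin D → ℂ) (m : ℂ), Mop hρ0 hρ1.posSemidef *ᵥ v = m • v →
      m ^ 2 * (star v ⬝ᵥ ρ1 *ᵥ v) = star v ⬝ᵥ ρ0 *ᵥ v := by
  have sqrt_mul_self : ∀ {A : Matrix (Fin D) (Fin D) ℂ} (hA : A.PosSemidef),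
      hA.sqrt * hA.sqrt = A := by
    intro A hA
    unfold Matrix.PosSemidef.sqrt
    have hU : (star hA.1.eigenvectorUnitary : Matrix (Fin D) (Fin D) ℂ) *
        hA.1.eigenvectorUnitary = 1 := Unitary.coe_star_mul_self _
    have hd : (diagonal ((↑) ∘ (fun i => (hA.1.eigenvalues i).sqrt)) : Matrix (Fin D) (Fin D) ℂ) *
        diagonal ((↑) ∘ (fun i => (hA.1.eigenvalues i).sqrt)) =
        diagonal (RCLike.ofReal ∘ hA.1.eigenvalues) := by
      rw [diagonal_mul_diagonal]
      congr 1
      funext i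
      simp only [Function.comp_apply]
      rw [← Complex.ofReal_mul, Real.mul_self_sqrt (hA.eigenvalues_nonneg i)]
      rfl
    conv_rhs => rw [hA.1.spectral_theorem, Unitary.conjStarAlgAut_apply]
    rw [← hd]
    simp only [Matrix.mul_assoc]
    rw [← Matrix.mul_assoc (star _ : Matrix (Fin D) (Fin D) ℂ) _ (_ * _), hU, Matrix.one_mul]
    rfl
  set S := hρ1.posSemidef.sqrt with hSdef
  have hSH : S.IsHermitian := hρ1.posSemidef.posSemidef_sqrt.isHermitian
  have hSS : S * S = ρ1 := sqrt_mul_self hρ1.posSemidef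
  have hdet : IsUnit S.det := by
    rw [isUnit_iff_ne_zero]
    intro h
    have : ρ1.det = 0 := by rw [← hSS, det_mul, h, mul_zero]
    exact hρ1.det_pos.ne' this
  set R := (sandwichPosSemidef hρ0 hρ1.posSemidef).sqrt with hRdef
  have hRH : R.IsHermitian := (sandwichPosSemidef hρ0 hρ1.posSemidef).posSemidef_sqrt.isHermitian
  have hRR : R * R = S * ρ0 * S := sqrt_mul_self (sandwichPosSemidef hρ0 hρ1.posSemidef)
  have hM : Mop hρ0 hρ1.posSemidef = S⁻¹ * R * S⁻¹ := rfl
  have key : Mop hρ0 hρ1.posSemidef * ρ1 * Mop hρ0 hρ1.posSemidef = ρ0 := by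
    rw [hM, ← hSS]
    calc S⁻¹ * R * S⁻¹ * (S * S) * (S⁻¹ * R * S⁻¹)
        = S⁻¹ * (R * (S⁻¹ * (S * (S * (S⁻¹ * (R * S⁻¹)))))) := by
          simp only [Matrix.mul_assoc]
      _ = S⁻¹ * (R * (S * (S⁻¹ * (R * S⁻¹)))) := by
          rw [nonsing_inv_mul_cancel_left _ _ hdet]
      _ = S⁻¹ * (R * (R * S⁻¹)) := by rw [mul_nonsing_inv_cancel_left _ _ hdet]
      _ = S⁻¹ * (R * R) * S⁻¹ := by simp only [Matrix.mul_assoc]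
      _ = S⁻¹ * (S * ρ0 * S) * S⁻¹ := by rw [hRR]
      _ = ρ0 := by
          rw [Matrix.mul_assoc S, ← Matrix.mul_assoc S⁻¹, nonsing_inv_mul _ hdet,
            Matrix.one_mul, Matrix.mul_assoc, mul_nonsing_inv _ hdet, Matrix.mul_one]
  refine ⟨key, fun v m hv => ?_⟩
  by_cases hv0 : v = 0
  · simp [hv0]
  · have hMH : (Mop hρ0 hρ1.posSemidef).IsHermitian := by
      rw [hM]
      simp only [Matrix.IsHermitian, conjTranspose_mul, hSH.inv.eq, hRH.eq, Matrix.mul_assoc]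
    -- star v ⬝ᵥ M *ᵥ w = conj m * (star v ⬝ᵥ w)
    have hleft : ∀ w : Fin D → ℂ,
        star v ⬝ᵥ (Mop hρ0 hρ1.posSemidef *ᵥ w) = (starRingEnd ℂ) m * (star v ⬝ᵥ w) := by
      intro w
      rw [dotProduct_mulVec, ← hMH.eq, ← star_mulVec, hv, star_smul, smul_dotProduct,
        smul_eq_mul, starRingEnd_apply]
    have hmreal : (starRingEnd ℂ) m = m := by
      have h1 : star v ⬝ᵥ (Mop hρ0 hρ1.posSemidef *ᵥ v) = m * (star v ⬝ᵥ v) := by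
        rw [hv, dotProduct_smul, smul_eq_mul]
      have h2 := hleft v
      rw [h1] at h2
      have hvv : (star v ⬝ᵥ v) ≠ 0 := fun h => hv0 (dotProduct_star_self_eq_zero.mp h)
      exact (mul_right_cancel₀ hvv h2.symm)
    calc m ^ 2 * (star v ⬝ᵥ ρ1 *ᵥ v)
        = (starRingEnd ℂ) m * (star v ⬝ᵥ (m • (ρ1 *ᵥ v))) := by
          rw [dotProduct_smul, smul_eq_mul, hmreal]; ring
      _ = star v ⬝ᵥ (Mop hρ0 hρ1.posSemidef *ᵥ (m • (ρ1 *ᵥ v))) := (hleft _).symm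
      _ = star v ⬝ᵥ (Mop hρ0 hρ1.posSemidef *ᵥ (ρ1 *ᵥ (Mop hρ0 hρ1.posSemidef *ᵥ v))) := by
          rw [hv]; simp [mulVec_smul]
      _ = star v ⬝ᵥ ρ0 *ᵥ v := by
          rw [mulVec_mulVec, mulVec_mulVec, key]
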